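/- Let N ≥ 2 and λ > 0. Assume w : ℝ^N → ℝ is continuous, positive, radially symmetric, and satisfies lim_{|x|→∞} w(x)|x|^{(N−1)/2} e^{√λ|x|} = σ for some σ > 0. Assume f : ℝ → ℝ is continuously differentiable on [0,∞) with f(t) = 0 for t ≤ 0, |f(t)| ≤ D(t^{p₁} + t^{p₂}) and |f'(t)| ≤ D(t^{p₁−1} + t^{p₂−1}) for all t ≥ 0, where D > 0 and 1 < p₁ ≤ p₂. Let x₀, y ∈ ℝ^N with |x₀| = 1 and |y − x₀| = 2. Then there exist C > 0 and R₀ > 0 such that for all R ≥ R₀ and all τ ≥ 0: | ∫_{ℝ^N} ( τ f(w(x − Rx₀)) − f(τ w(x − Rx₀)) ) w(x − Ry) dx | ≤ C |τ − 1| (1 + τ^{p₂−1}) R^{−(N−1)/2} e^{−2R√λ}. -/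

import Mathlib

open MeasureTheory Filter Metric

lemma mvt_aux (f : ℝ → ℝ) (D p₁ p₂ : ℝ) (hD : 0 < D) (hp₁ : 1 < p₁) (hp : p₁ ≤ p₂)
    (hfC1 : ContDiffOn ℝ 1 f (Set.Ici 0)) (hf0 : ∀ t ≤ (0:ℝ), f t = 0)
    (hfgrowth : ∀ t ≥ (0:ℝ), |f t| ≤ D * (t ^ p₁ + t ^ p₂))
    (hfderiv : ∀ t ≥ (0:ℝ), |deriv f t| ≤ D * (t ^ (p₁ - 1) + t ^ (p₂ - 1)))
    (s : ℝ) (hs : 0 < s) (τ : ℝ) (hτ : 0 ≤ τ) :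
    |τ * f s - f (τ * s)| ≤ 2 * D * |τ - 1| * (1 + τ ^ (p₂ - 1)) * (s ^ p₁ + s ^ p₂) := by
  have hs1 : 0 < s ^ p₁ := Real.rpow_pos_of_pos hs _
  have hs2 : 0 < s ^ p₂ := Real.rpow_pos_of_pos hs _
  rcases hτ.eq_or_lt with h0 | h0
  · have hfz : f 0 = 0 := hf0 0 le_rfl
    rw [← h0]
    simp only [zero_mul, hfz, sub_zero, abs_zero]
    positivity
  · set a : ℝ := min τ 1 with ha_def
    set b : ℝ := max τ 1 with hb_def
    have ha : 0 < a := lt_min h0 one_pos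
    set C0 : ℝ := 2 * D * (1 + τ ^ (p₂ - 1)) * (s ^ p₁ + s ^ p₂) with hC0
    have hτp : 0 ≤ τ ^ (p₂ - 1) := Real.rpow_nonneg hτ _
    -- derivative
    have hderiv : ∀ t ∈ Set.Icc a b, HasDerivWithinAt (fun t => t * f s - f (t * s))
        (f s - deriv f (t * s) * s) (Set.Icc a b) t := by
      intro t ht
      have ht0 : 0 < t := lt_of_lt_of_le ha ht.1
      have hts : 0 < t * s := mul_pos ht0 hs
      have hdf : DifferentiableAt ℝ f (t * s) :=
        ((hfC1.contDiffAt (Ici_mem_nhds hts)).differentiableAt one_ne_zero)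
      have h2 : HasDerivAt (fun t : ℝ => f (t * s)) (deriv f (t * s) * s) t := by
        have := (hdf.hasDerivAt).comp t ((hasDerivAt_id t).mul_const s)
        simpa [Function.comp_def] using this
      have h1 : HasDerivAt (fun t : ℝ => t * f s) (f s) t := by
        simpa using (hasDerivAt_id t).mul_const (f s)
      exact (h1.sub h2).hasDerivWithinAt
    -- bound on derivative
    have hbound : ∀ t ∈ Set.Icc a b, ‖f s - deriv f (t * s) * s‖ ≤ C0 := by
      intro t ht
      have ht0 : 0 < t := lt_of_lt_of_le ha ht.1
      have hts : 0 < t * s := mul_pos ht0 hs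
      have hq : ∀ q : ℝ, 1 < q → q ≤ p₂ → t ^ (q - 1) ≤ 1 + τ ^ (p₂ - 1) := by
        intro q hq1 hq2
        rcases le_total τ 1 with hτ1 | hτ1
        · have htb : t ≤ 1 := le_trans ht.2 (max_le hτ1 le_rfl)
          have : t ^ (q - 1) ≤ 1 := Real.rpow_le_one ht0.le htb (by linarith)
          linarith
        · have htb : t ≤ τ := le_trans ht.2 (max_le le_rfl hτ1)
          have h1 : t ^ (q - 1) ≤ τ ^ (q - 1) :=
            Real.rpow_le_rpow ht0.le htb (by linarith)
          have h2 : τ ^ (q - 1) ≤ τ ^ (p₂ - 1) :=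
            Real.rpow_le_rpow_of_exponent_le hτ1 (by linarith)
          linarith
      have hmul : ∀ q : ℝ, 1 < q → (t * s) ^ (q - 1) * s = t ^ (q - 1) * s ^ q := by
        intro q hq1
        rw [Real.mul_rpow ht0.le hs.le, mul_assoc]
        congr 1
        rw [← Real.rpow_add_one hs.ne' (q - 1)]
        ring_nf
      have hd : |deriv f (t * s) * s| ≤ D * (1 + τ ^ (p₂ - 1)) * (s ^ p₁ + s ^ p₂) := by
        have h := hfderiv (t * s) hts.le
        have h1 := hq p₁ hp₁ hp
        have h2 := hq p₂ (lt_of_lt_of_le hp₁ hp) le_rfl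
        have e1 := hmul p₁ hp₁
        have e2 := hmul p₂ (lt_of_lt_of_le hp₁ hp)
        have hts1 : 0 ≤ (t*s) ^ (p₁ - 1) := Real.rpow_nonneg hts.le _
        have hts2 : 0 ≤ (t*s) ^ (p₂ - 1) := Real.rpow_nonneg hts.le _
        calc |deriv f (t * s) * s| = |deriv f (t * s)| * s := by
              rw [abs_mul, abs_of_nonneg hs.le]
          _ ≤ (D * ((t*s) ^ (p₁ - 1) + (t*s) ^ (p₂ - 1))) * s :=
              mul_le_mul_of_nonneg_right h hs.le
          _ = D * ((t*s) ^ (p₁ - 1) * s + (t*s) ^ (p₂ - 1) * s) := by ring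
          _ = D * (t ^ (p₁ - 1) * s ^ p₁ + t ^ (p₂ - 1) * s ^ p₂) := by rw [e1, e2]
          _ ≤ D * ((1 + τ ^ (p₂ - 1)) * s ^ p₁ + (1 + τ ^ (p₂ - 1)) * s ^ p₂) := by
              have := mul_le_mul_of_nonneg_right h1 hs1.le
              have := mul_le_mul_of_nonneg_right h2 hs2.le
              nlinarith
          _ = D * (1 + τ ^ (p₂ - 1)) * (s ^ p₁ + s ^ p₂) := by ring
      have hfs : |f s| ≤ D * (1 + τ ^ (p₂ - 1)) * (s ^ p₁ + s ^ p₂) := by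
        have h := hfgrowth s hs.le
        nlinarith [mul_nonneg (mul_nonneg hD.le hτp) (le_of_lt (add_pos hs1 hs2))]
      calc ‖f s - deriv f (t * s) * s‖ ≤ |f s| + |deriv f (t * s) * s| := by
            rw [Real.norm_eq_abs]; exact abs_sub _ _
        _ ≤ C0 := by rw [hC0]; linarith
    have hmemτ : τ ∈ Set.Icc a b := ⟨min_le_left _ _, le_max_left _ _⟩
    have hmem1 : (1:ℝ) ∈ Set.Icc a b := ⟨min_le_right _ _, le_max_right _ _⟩
    have key := (convex_Icc a b).norm_image_sub_le_of_norm_hasDerivWithin_le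
      hderiv hbound hmem1 hmemτ
    simp only [Real.norm_eq_abs, one_mul] at key
    have : |τ * f s - f (τ * s)| ≤ C0 * |τ - 1| := by
      calc |τ * f s - f (τ * s)| = |τ * f s - f (τ * s) - (1 * f s - f (1 * s))| := by
            norm_num
        _ ≤ C0 * |τ - 1| := by
            have := key; simpa using this
    calc |τ * f s - f (τ * s)| ≤ C0 * |τ - 1| := this
      _ = 2 * D * |τ - 1| * (1 + τ ^ (p₂ - 1)) * (s ^ p₁ + s ^ p₂) := by rw [hC0]; ring
lemma integrable_exp_norm_aux (N : ℕ) (c : ℝ) (hc : 0 < c) :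
    Integrable (fun x : EuclideanSpace ℝ (Fin N) => Real.exp (-(c * ‖x‖))) := by
  set n : ℕ := N + 1 with hn
  have hfin : (Module.finrank ℝ (EuclideanSpace ℝ (Fin N)) : ℝ) < ((N:ℝ) + 1) := by
    simp [finrank_euclideanSpace]
  have base : Integrable (fun x : EuclideanSpace ℝ (Fin N) => (1 + ‖x‖) ^ (-((N:ℝ)+1))) :=
    integrable_one_add_norm hfin
  -- find K bounding (1+t)^n * exp (-(c*t)) on t ≥ 0
  have ht : Tendsto (fun t : ℝ => (1 + t) ^ n * Real.exp (-(c * t))) atTop (nhds 0) := by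
    have h1 : Tendsto (fun t : ℝ => c * (1 + t)) atTop atTop := by
      apply Tendsto.const_mul_atTop hc
      exact tendsto_atTop_add_const_left atTop 1 tendsto_id
    have h2 := (Real.tendsto_pow_mul_exp_neg_atTop_nhds_zero n).comp h1
    have h3 := h2.const_mul (Real.exp c / c ^ n)
    rw [mul_zero] at h3
    convert h3 using 2 with t
    simp only [Function.comp]
    rw [show -(c * (1 + t)) = -c + -(c * t) by ring, Real.exp_add, mul_pow]
    simp only [Real.exp_neg]
    field_simp
  obtain ⟨T, hT⟩ := eventually_atTop.1 (ht.eventually_lt_const one_pos)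
  set T' : ℝ := max T 0 with hT'
  obtain ⟨t₀, ht₀mem, hsup⟩ := (isCompact_Icc (a := (0:ℝ)) (b := T')).exists_isMaxOn
    ⟨0, by simp [hT', le_max_right]⟩
    (by continuity : Continuous fun t : ℝ => (1 + t) ^ n * Real.exp (-(c * t))).continuousOn
  set K : ℝ := max ((1 + t₀) ^ n * Real.exp (-(c * t₀))) 1 with hK
  have hbound : ∀ t : ℝ, 0 ≤ t → (1 + t) ^ n * Real.exp (-(c * t)) ≤ K := by
    intro t htt
    rcases le_total t T' with h | h
    · exact le_trans (hsup ⟨htt, h⟩) (le_max_left _ _)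
    · have : t ≥ T := le_trans (le_max_left _ _) h
      exact le_trans (hT t this).le (le_max_right _ _)
  refine (base.const_mul K).mono' ?_ ?_
  · exact (Real.continuous_exp.comp (continuous_const.mul continuous_norm).neg).aestronglyMeasurable
  · filter_upwards with x
    have hx : (0:ℝ) ≤ ‖x‖ := norm_nonneg x
    have h1t : (0:ℝ) < 1 + ‖x‖ := by linarith
    rw [Real.norm_eq_abs, abs_of_pos (Real.exp_pos _)]
    have hrw : (1 + ‖x‖) ^ (-((N:ℝ)+1)) = ((1 + ‖x‖) ^ n)⁻¹ := by
      rw [Real.rpow_neg h1t.le]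
      congr 1
      rw [show ((N:ℝ) + 1) = ((n:ℕ):ℝ) by push_cast [hn]; ring, Real.rpow_natCast]
    rw [hrw, ← div_eq_mul_inv, le_div_iff₀ (pow_pos h1t n), mul_comm]
    exact hbound ‖x‖ hx

set_option maxHeartbeats 2000000 in
theorem stmt9 (N : ℕ) (hN : 2 ≤ N) (lam : ℝ) (hlam : 0 < lam)
    (w : EuclideanSpace ℝ (Fin N) → ℝ) (σ : ℝ) (hσ : 0 < σ)
    (hwcont : Continuous w) (hwpos : ∀ x, 0 < w x)
    (hwrad : ∀ x y : EuclideanSpace ℝ (Fin N), ‖x‖ = ‖y‖ → w x = w y)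
    (hwlim : Tendsto
      (fun x => w x * ‖x‖ ^ (((N : ℝ) - 1) / 2) * Real.exp (Real.sqrt lam * ‖x‖))
      (comap (fun x : EuclideanSpace ℝ (Fin N) => ‖x‖) atTop) (nhds σ))
    (f : ℝ → ℝ) (D p₁ p₂ : ℝ) (hD : 0 < D) (hp₁ : 1 < p₁) (hp : p₁ ≤ p₂)
    (hfC1 : ContDiffOn ℝ 1 f (Set.Ici 0)) (hf0 : ∀ t ≤ (0:ℝ), f t = 0)
    (hfgrowth : ∀ t ≥ (0:ℝ), |f t| ≤ D * (t ^ p₁ + t ^ p₂))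
    (hfderiv : ∀ t ≥ (0:ℝ), |deriv f t| ≤ D * (t ^ (p₁ - 1) + t ^ (p₂ - 1)))
    (x₀ y : EuclideanSpace ℝ (Fin N)) (hx₀ : ‖x₀‖ = 1) (hy : ‖y - x₀‖ = 2) :
    ∃ C > (0:ℝ), ∃ R₀ > (0:ℝ), ∀ R ≥ R₀, ∀ τ ≥ (0:ℝ),
      |∫ x, (τ * f (w (x - R • x₀)) - f (τ * w (x - R • x₀))) * w (x - R • y)| ≤
        C * |τ - 1| * (1 + τ ^ (p₂ - 1)) *
          R ^ (-(((N : ℝ) - 1) / 2)) * Real.exp (-(2 * R * Real.sqrt lam)) := by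
  set k : ℝ := Real.sqrt lam with hkdef
  have hk0 : 0 < k := Real.sqrt_pos.2 hlam
  set α : ℝ := ((N : ℝ) - 1) / 2 with hαdef
  have hN2 : (2:ℝ) ≤ (N:ℝ) := by exact_mod_cast hN
  have hα0 : 0 ≤ α := by rw [hαdef]; linarith
  -- tail estimate
  have h2σ : ∀ᶠ z in comap (fun x : EuclideanSpace ℝ (Fin N) => ‖x‖) atTop,
      w z * ‖z‖ ^ α * Real.exp (k * ‖z‖) < 2 * σ := hwlim.eventually_lt_const (by linarith)
  rw [eventually_comap] at h2σ
  obtain ⟨M₀, hM₀⟩ := eventually_atTop.1 h2σ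
  set M : ℝ := max M₀ 1 with hMdef
  have hM1 : (1:ℝ) ≤ M := le_max_right _ _
  have htail : ∀ z : EuclideanSpace ℝ (Fin N), M ≤ ‖z‖ →
      w z ≤ 2 * σ * ‖z‖ ^ (-α) * Real.exp (-(k * ‖z‖)) := by
    intro z hz
    have hz1 : (1:ℝ) ≤ ‖z‖ := le_trans hM1 hz
    have hz0 : (0:ℝ) < ‖z‖ := lt_of_lt_of_le one_pos hz1
    have h := (hM₀ ‖z‖ (le_trans (le_max_left _ _) hz) z rfl).le
    have e1 : (0:ℝ) < ‖z‖ ^ α := Real.rpow_pos_of_pos hz0 _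
    have e2 : (0:ℝ) < Real.exp (k * ‖z‖) := Real.exp_pos _
    rw [Real.rpow_neg hz0.le, Real.exp_neg]
    calc w z = w z * ‖z‖ ^ α * Real.exp (k * ‖z‖) * (‖z‖ ^ α)⁻¹ * (Real.exp (k * ‖z‖))⁻¹ := by
          field_simp
      _ ≤ 2 * σ * (‖z‖ ^ α)⁻¹ * (Real.exp (k * ‖z‖))⁻¹ := by gcongr
  -- global bound A
  obtain ⟨zS, hzSmem, hzS⟩ := (isCompact_closedBall (0 : EuclideanSpace ℝ (Fin N)) M).exists_isMaxOn
    ⟨0, mem_closedBall_self (by linarith)⟩ hwcont.continuousOn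
  set A : ℝ := max (max (2 * σ) (w zS * Real.exp (k * M))) 1 with hAdef
  have hA1 : (1:ℝ) ≤ A := le_max_right _ _
  have hA0 : (0:ℝ) < A := lt_of_lt_of_le one_pos hA1
  have h2σA : 2 * σ ≤ A := le_trans (le_max_left _ _) (le_max_left _ _)
  have hA : ∀ z, w z ≤ A * Real.exp (-(k * ‖z‖)) := by
    intro z
    rcases le_total ‖z‖ M with hzM | hzM
    · have h1 : w z ≤ w zS := hzS (mem_closedBall_zero_iff.2 hzM)
      have h2 : w zS * Real.exp (k * M) ≤ A := le_trans (le_max_right _ _) (le_max_left _ _)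
      have h3 : Real.exp (-(k * M)) ≤ Real.exp (-(k * ‖z‖)) := by
        apply Real.exp_le_exp.2
        have := mul_le_mul_of_nonneg_left hzM hk0.le
        linarith
      calc w z ≤ w zS := h1
        _ = w zS * Real.exp (k * M) * Real.exp (-(k * M)) := by
            rw [mul_assoc, ← Real.exp_add]; simp
        _ ≤ A * Real.exp (-(k * ‖z‖)) :=
            mul_le_mul h2 h3 (Real.exp_pos _).le hA0.le
    · have h := htail z hzM
      have hz1 : (1:ℝ) ≤ ‖z‖ := le_trans hM1 hzM
      have h1 : ‖z‖ ^ (-α) ≤ 1 := Real.rpow_le_one_of_one_le_of_nonpos hz1 (by linarith)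
      calc w z ≤ 2 * σ * ‖z‖ ^ (-α) * Real.exp (-(k * ‖z‖)) := h
        _ ≤ 2 * σ * 1 * Real.exp (-(k * ‖z‖)) := by gcongr
        _ ≤ A * Real.exp (-(k * ‖z‖)) := by
            have := Real.exp_pos (-(k * ‖z‖))
            nlinarith
  -- constants
  set β : ℝ := (p₁ - 1) * k with hβdef
  have hβ0 : 0 < β := mul_pos (by linarith) hk0
  have hKp_pos : ∀ p : ℝ, 0 < (A ^ p + (2*σ) ^ p) * (A + 2*σ) := by
    intro p
    have h1 : 0 < A ^ p := Real.rpow_pos_of_pos hA0 _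
    have h2 : 0 < (2*σ) ^ p := Real.rpow_pos_of_pos (by linarith) _
    have h3 : (0:ℝ) < A + 2*σ := by linarith
    exact mul_pos (by linarith) h3
  set I : ℝ := ∫ x : EuclideanSpace ℝ (Fin N), Real.exp (-(β * ‖x‖)) with hIdef
  have hI0 : 0 ≤ I := integral_nonneg fun x => (Real.exp_pos _).le
  set K : ℝ := (A ^ p₁ + (2*σ) ^ p₁) * (A + 2*σ) + (A ^ p₂ + (2*σ) ^ p₂) * (A + 2*σ) with hKdef
  have hK0 : 0 < K := by have := hKp_pos p₁; have := hKp_pos p₂; rw [hKdef]; linarith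
  have h2DKI : (0:ℝ) ≤ 2 * D * K * I :=
    mul_nonneg (mul_nonneg (by linarith : (0:ℝ) ≤ 2 * D) hK0.le) hI0
  refine ⟨2 * D * K * I + 1, by linarith, M, by linarith, ?_⟩
  intro R hR τ hτ
  have hR1 : (1:ℝ) ≤ R := le_trans hM1 hR
  have hR0 : (0:ℝ) < R := by linarith
  have hRα : (0:ℝ) < R ^ (-α) := Real.rpow_pos_of_pos hR0 _
  -- key interaction estimate
  have key : ∀ p : ℝ, 1 ≤ p → p₁ ≤ p → ∀ x : EuclideanSpace ℝ (Fin N),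
      (w (x - R • x₀)) ^ p * w (x - R • y) ≤
        ((A ^ p + (2*σ) ^ p) * (A + 2*σ)) * R ^ (-α) *
          (Real.exp (-(2 * R * k)) * Real.exp (-(β * ‖x - R • x₀‖))) := by
    intro p hp1 hpp x
    set u : EuclideanSpace ℝ (Fin N) := x - R • x₀ with hu
    set v : EuclideanSpace ℝ (Fin N) := x - R • y with hv
    have h1p : 0 < A ^ p := Real.rpow_pos_of_pos hA0 _
    have h2p : 0 < (2*σ) ^ p := Real.rpow_pos_of_pos (by linarith) _
    have hsum : 2 * R ≤ ‖u‖ + ‖v‖ := by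
      have h1 : u - v = R • (y - x₀) := by rw [hu, hv, smul_sub]; abel
      have h2 : ‖u - v‖ = R * 2 := by
        rw [h1, norm_smul, Real.norm_eq_abs, abs_of_pos hR0, hy]
      have h3 := norm_sub_le u v
      linarith
    have hexp : Real.exp (-(k * ‖u‖ * p) + -(k * ‖v‖)) ≤
        Real.exp (-(2 * R * k) + -(β * ‖u‖)) := by
      apply Real.exp_le_exp.2
      have h1 : (p₁ - 1) * ‖u‖ ≤ (p - 1) * ‖u‖ :=
        mul_le_mul_of_nonneg_right (by linarith) (norm_nonneg u)
      have h2 := mul_le_mul_of_nonneg_left hsum hk0.le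
      have h3 := mul_le_mul_of_nonneg_right h1 hk0.le
      rw [hβdef]
      linarith [h2, h3]
    rcases le_total R ‖v‖ with hcase | hcase
    · have h1 : (w u) ^ p ≤ A ^ p * Real.exp (-(k * ‖u‖ * p)) := by
        calc (w u) ^ p ≤ (A * Real.exp (-(k * ‖u‖))) ^ p :=
              Real.rpow_le_rpow (hwpos u).le (hA u) (by linarith)
          _ = A ^ p * Real.exp (-(k * ‖u‖ * p)) := by
              rw [Real.mul_rpow hA0.le (Real.exp_pos _).le, ← Real.exp_mul]
              ring_nf
      have hwv : w v ≤ 2 * σ * R ^ (-α) * Real.exp (-(k * ‖v‖)) := by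
        have h := htail v (le_trans hR hcase)
        have h2 : ‖v‖ ^ (-α) ≤ R ^ (-α) :=
          Real.rpow_le_rpow_of_nonpos hR0 hcase (by linarith)
        calc w v ≤ 2 * σ * ‖v‖ ^ (-α) * Real.exp (-(k * ‖v‖)) := h
          _ ≤ 2 * σ * R ^ (-α) * Real.exp (-(k * ‖v‖)) := by gcongr
      have hc : A ^ p * (2 * σ * R ^ (-α)) ≤ ((A ^ p + (2*σ) ^ p) * (A + 2*σ)) * R ^ (-α) := by
        have hbase : A ^ p * (2*σ) ≤ (A ^ p + (2*σ) ^ p) * (A + 2*σ) := by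
          nlinarith [mul_pos h1p hA0, mul_pos h2p hA0,
            mul_pos h2p (show (0:ℝ) < 2*σ by linarith)]
        calc A ^ p * (2 * σ * R ^ (-α)) = (A ^ p * (2*σ)) * R ^ (-α) := by ring
          _ ≤ ((A ^ p + (2*σ) ^ p) * (A + 2*σ)) * R ^ (-α) :=
            mul_le_mul_of_nonneg_right hbase hRα.le
      calc (w u) ^ p * w v
          ≤ (A ^ p * Real.exp (-(k * ‖u‖ * p))) * (2 * σ * R ^ (-α) * Real.exp (-(k * ‖v‖))) :=
            mul_le_mul h1 hwv (hwpos v).le (by positivity)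
        _ = (A ^ p * (2 * σ * R ^ (-α))) * Real.exp (-(k * ‖u‖ * p) + -(k * ‖v‖)) := by
            rw [Real.exp_add]; ring
        _ ≤ (((A ^ p + (2*σ) ^ p) * (A + 2*σ)) * R ^ (-α)) *
              Real.exp (-(2 * R * k) + -(β * ‖u‖)) :=
            mul_le_mul hc hexp (Real.exp_pos _).le (by positivity)
        _ = ((A ^ p + (2*σ) ^ p) * (A + 2*σ)) * R ^ (-α) *
              (Real.exp (-(2 * R * k)) * Real.exp (-(β * ‖u‖))) := by
            rw [Real.exp_add]
    · have huM : M ≤ ‖u‖ := by linarith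
      have huR : R ≤ ‖u‖ := by linarith
      have h1 : (w u) ^ p ≤ (2*σ) ^ p * R ^ (-α) * Real.exp (-(k * ‖u‖ * p)) := by
        have h := htail u huM
        have hma : ‖u‖ ^ (-α) ≤ R ^ (-α) :=
          Real.rpow_le_rpow_of_nonpos hR0 huR (by linarith)
        have hwu : w u ≤ 2 * σ * R ^ (-α) * Real.exp (-(k * ‖u‖)) := by
          calc w u ≤ 2 * σ * ‖u‖ ^ (-α) * Real.exp (-(k * ‖u‖)) := h
            _ ≤ 2 * σ * R ^ (-α) * Real.exp (-(k * ‖u‖)) := by gcongr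
        calc (w u) ^ p ≤ (2 * σ * R ^ (-α) * Real.exp (-(k * ‖u‖))) ^ p :=
              Real.rpow_le_rpow (hwpos u).le hwu (by linarith)
          _ = (2*σ) ^ p * (R ^ (-α)) ^ p * Real.exp (-(k * ‖u‖ * p)) := by
              rw [Real.mul_rpow (by positivity) (Real.exp_pos _).le,
                Real.mul_rpow (by linarith) hRα.le, ← Real.exp_mul]
              ring_nf
          _ ≤ (2*σ) ^ p * R ^ (-α) * Real.exp (-(k * ‖u‖ * p)) := by
              have hh : (R ^ (-α)) ^ p ≤ R ^ (-α) := by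
                rw [← Real.rpow_mul hR0.le]
                apply Real.rpow_le_rpow_of_exponent_le hR1
                nlinarith [mul_nonneg hα0 (show (0:ℝ) ≤ p - 1 by linarith)]
              gcongr
      have hc : ((2*σ) ^ p * R ^ (-α)) * A ≤ ((A ^ p + (2*σ) ^ p) * (A + 2*σ)) * R ^ (-α) := by
        have hbase : (2*σ) ^ p * A ≤ (A ^ p + (2*σ) ^ p) * (A + 2*σ) := by
          nlinarith [mul_pos h1p hA0, mul_pos h1p (show (0:ℝ) < 2*σ by linarith),
            mul_pos h2p (show (0:ℝ) < 2*σ by linarith)]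
        calc ((2*σ) ^ p * R ^ (-α)) * A = ((2*σ) ^ p * A) * R ^ (-α) := by ring
          _ ≤ ((A ^ p + (2*σ) ^ p) * (A + 2*σ)) * R ^ (-α) :=
            mul_le_mul_of_nonneg_right hbase hRα.le
      calc (w u) ^ p * w v
          ≤ ((2*σ) ^ p * R ^ (-α) * Real.exp (-(k * ‖u‖ * p))) * (A * Real.exp (-(k * ‖v‖))) :=
            mul_le_mul h1 (hA v) (hwpos v).le (by positivity)
        _ = (((2*σ) ^ p * R ^ (-α)) * A) * Real.exp (-(k * ‖u‖ * p) + -(k * ‖v‖)) := by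
            rw [Real.exp_add]; ring
        _ ≤ (((A ^ p + (2*σ) ^ p) * (A + 2*σ)) * R ^ (-α)) *
              Real.exp (-(2 * R * k) + -(β * ‖u‖)) :=
            mul_le_mul hc hexp (Real.exp_pos _).le (by positivity)
        _ = ((A ^ p + (2*σ) ^ p) * (A + 2*σ)) * R ^ (-α) *
              (Real.exp (-(2 * R * k)) * Real.exp (-(β * ‖u‖))) := by
            rw [Real.exp_add]
  -- pointwise bound on the integrand
  have hτp : 0 ≤ τ ^ (p₂ - 1) := Real.rpow_nonneg hτ _
  have hc3_0 : 0 ≤ 2 * D * |τ - 1| * (1 + τ ^ (p₂ - 1)) := by positivity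
  have hpoint : ∀ x : EuclideanSpace ℝ (Fin N),
      |(τ * f (w (x - R • x₀)) - f (τ * w (x - R • x₀))) * w (x - R • y)| ≤
        (2 * D * |τ - 1| * (1 + τ ^ (p₂ - 1)) * K * R ^ (-α) * Real.exp (-(2 * R * k))) *
          Real.exp (-(β * ‖x - R • x₀‖)) := by
    intro x
    have hmvt := mvt_aux f D p₁ p₂ hD hp₁ hp hfC1 hf0 hfgrowth hfderiv
      (w (x - R • x₀)) (hwpos _) τ hτ
    have k1 := key p₁ (by linarith) le_rfl x
    have k2 := key p₂ (by linarith) hp x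
    calc |(τ * f (w (x - R • x₀)) - f (τ * w (x - R • x₀))) * w (x - R • y)|
        = |τ * f (w (x - R • x₀)) - f (τ * w (x - R • x₀))| * w (x - R • y) := by
          rw [abs_mul, abs_of_pos (hwpos _)]
      _ ≤ (2 * D * |τ - 1| * (1 + τ ^ (p₂ - 1)) *
            ((w (x - R • x₀)) ^ p₁ + (w (x - R • x₀)) ^ p₂)) * w (x - R • y) :=
          mul_le_mul_of_nonneg_right hmvt (hwpos _).le
      _ = 2 * D * |τ - 1| * (1 + τ ^ (p₂ - 1)) *
            ((w (x - R • x₀)) ^ p₁ * w (x - R • y) + (w (x - R • x₀)) ^ p₂ * w (x - R • y)) := by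
          ring
      _ ≤ 2 * D * |τ - 1| * (1 + τ ^ (p₂ - 1)) *
            (K * R ^ (-α) * (Real.exp (-(2 * R * k)) * Real.exp (-(β * ‖x - R • x₀‖)))) := by
          apply mul_le_mul_of_nonneg_left ?_ hc3_0
          calc (w (x - R • x₀)) ^ p₁ * w (x - R • y) + (w (x - R • x₀)) ^ p₂ * w (x - R • y)
              ≤ ((A ^ p₁ + (2*σ) ^ p₁) * (A + 2*σ)) * R ^ (-α) *
                  (Real.exp (-(2 * R * k)) * Real.exp (-(β * ‖x - R • x₀‖))) +
                ((A ^ p₂ + (2*σ) ^ p₂) * (A + 2*σ)) * R ^ (-α) *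
                  (Real.exp (-(2 * R * k)) * Real.exp (-(β * ‖x - R • x₀‖))) :=
                add_le_add k1 k2
            _ = K * R ^ (-α) * (Real.exp (-(2 * R * k)) * Real.exp (-(β * ‖x - R • x₀‖))) := by
                rw [hKdef]; ring
      _ = (2 * D * |τ - 1| * (1 + τ ^ (p₂ - 1)) * K * R ^ (-α) * Real.exp (-(2 * R * k))) *
            Real.exp (-(β * ‖x - R • x₀‖)) := by ring
  have hbint : Integrable (fun x : EuclideanSpace ℝ (Fin N) =>
      (2 * D * |τ - 1| * (1 + τ ^ (p₂ - 1)) * K * R ^ (-α) * Real.exp (-(2 * R * k))) *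
        Real.exp (-(β * ‖x - R • x₀‖))) :=
    ((integrable_exp_norm_aux N β hβ0).comp_sub_right (R • x₀)).const_mul _
  have hP : 0 ≤ |τ - 1| * (1 + τ ^ (p₂ - 1)) * R ^ (-α) * Real.exp (-(2 * R * k)) := by
    positivity
  calc |∫ x, (τ * f (w (x - R • x₀)) - f (τ * w (x - R • x₀))) * w (x - R • y)|
      ≤ ∫ x, |(τ * f (w (x - R • x₀)) - f (τ * w (x - R • x₀))) * w (x - R • y)| := by
        have hni := norm_integral_le_integral_norm (μ := (volume : Measure (EuclideanSpace ℝ (Fin N))))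
          (f := fun x : EuclideanSpace ℝ (Fin N) =>
            (τ * f (w (x - R • x₀)) - f (τ * w (x - R • x₀))) * w (x - R • y))
        simp only [Real.norm_eq_abs] at hni
        exact hni
    _ ≤ ∫ x, (2 * D * |τ - 1| * (1 + τ ^ (p₂ - 1)) * K * R ^ (-α) * Real.exp (-(2 * R * k))) *
          Real.exp (-(β * ‖x - R • x₀‖)) :=
        integral_mono_of_nonneg (ae_of_all _ fun x => abs_nonneg _) hbint (ae_of_all _ hpoint)
    _ = (2 * D * |τ - 1| * (1 + τ ^ (p₂ - 1)) * K * R ^ (-α) * Real.exp (-(2 * R * k))) * I := by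
        rw [integral_const_mul]
        congr 1
        exact integral_sub_right_eq_self (fun x : EuclideanSpace ℝ (Fin N) =>
          Real.exp (-(β * ‖x‖))) (R • x₀)
    _ = (2 * D * K * I) * (|τ - 1| * (1 + τ ^ (p₂ - 1)) * R ^ (-α) * Real.exp (-(2 * R * k))) := by
        ring
    _ ≤ (2 * D * K * I + 1) * (|τ - 1| * (1 + τ ^ (p₂ - 1)) * R ^ (-α) * Real.exp (-(2 * R * k))) :=
        mul_le_mul_of_nonneg_right (by linarith) hP
    _ = (2 * D * K * I + 1) * |τ - 1| * (1 + τ ^ (p₂ - 1)) * R ^ (-α) *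
          Real.exp (-(2 * R * k)) := by ring
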